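/- Let λ ∈ P⁺ be nonzero and ξ = (ξ^α)_{α∈R⁺} a λ-compatible tuple of partitions. Then the submodule of W_loc(λ) generated by the elements (x_α⁺⊗t)^s (x_α⁻⊗1)^{s+r} w_λ, for α ∈ R⁺ and s,r ≥ 1 with s+r ≥ 1 + rk + Σ_{j≥k+1} ξ^α_j for some k ≥ 1, coincides with the submodule generated by the elements _k x_α⁻(r,s) w_λ for α ∈ R⁺ and r,s,k ≥ 1 with s+r ≥ 1 + kr + Σ_{j≥k+1} ξ^α_j; hence V(ξ) admits this second presentation. In particular, for all α ∈ R⁺ and r,k ≥ 1 with r ≥ 1 + Σ_{j≥k+1} ξ^α_j, one has (x_α⁻ ⊗ t^k)^r v_ξ = 0. -/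

import Mathlib

open scoped TensorProduct
open Polynomial

noncomputable section

/-! ## The current algebra `𝔤[t] = ℂ[t] ⊗ 𝔤` and its universal enveloping algebra -/

variable (L : Type) [LieRing L] [LieAlgebra ℂ L]

/-- The current algebra `𝔤[t] = ℂ[t] ⊗ 𝔤` of a complex Lie algebra `𝔤`. -/
abbrev CurAlg := Polynomial ℂ ⊗[ℂ] L

instance : LieAlgebra ℂ (CurAlg L) where
  lie_smul c x y := by
    have h := lie_smul (algebraMap ℂ (Polynomial ℂ) c) x y
    rwa [algebraMap_smul, algebraMap_smul] at h

/-- The universal enveloping algebra `U(𝔤[t])`. -/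
abbrev UCA := UniversalEnvelopingAlgebra ℂ (CurAlg L)

attribute [local instance 100] LieRing.ofAssociativeRing

/-- The canonical embedding `𝔤[t] → U(𝔤[t])`. -/
abbrev ιU : CurAlg L →ₗ⁅ℂ⁆ UCA L := UniversalEnvelopingAlgebra.ι ℂ

variable {L}

/-- The element `x ⊗ t^s` of `U(𝔤[t])`. -/
abbrev xt (x : L) (s : ℕ) : UCA L := ιU L ((X ^ s : ℂ[X]) ⊗ₜ x)

/-- Divided power `u^{(q)} = u^q/q!`. -/
def dpow (u : UCA L) (q : ℕ) : UCA L := (q.factorial : ℂ)⁻¹ • u ^ q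

/-! ## Root data for `𝔤`, the local Weyl module and the modules `V(ξ)`.

`Φ` indexes the positive roots `R⁺`; `ep α`, `em α`, `hc α` are the elements
`x_α⁺ ∈ 𝔤_α`, `x_α⁻ ∈ 𝔤_{-α}` and the coroot `h_α`; `ιI` indexes the simple roots via
`simple : ιI → Φ`.  The functional `lam` is the weight `λ` and `lamNat α = λ(h_α) ∈ ℤ≥0`. -/

variable {Φ ιI : Type}

/-- The nilpotent subalgebra `𝔫⁺`, namely the span of the positive root vectors. -/
def posPart (ep : Φ → L) : Submodule ℂ L := Submodule.span ℂ (Set.range ep)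

/-- The Cartan subalgebra `𝔥`, namely the span of the coroots. -/
def cartan (hc : Φ → L) : Submodule ℂ L := Submodule.span ℂ (Set.range hc)

/-- The generators of the defining left ideal of the local Weyl module `W_loc(λ)`. -/
def weylGens (ep em hc : Φ → L) (simple : ιI → Φ) (lam : Module.Dual ℂ L)
    (lamNat : Φ → ℕ) : Set (UCA L) :=
  {u | ∃ x ∈ posPart ep, ∃ s : ℕ, u = xt x s} ∪
    {u | ∃ x ∈ cartan hc, ∃ s : ℕ, u = xt x s - (if s = 0 then lam x else 0) • 1} ∪
    {u | ∃ i : ιI, u = xt (em (simple i)) 0 ^ (lamNat (simple i) + 1)}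

/-- The local Weyl module `W_loc(λ)`, as quotient of `U(𝔤[t])` by the left ideal generated by
the elements `x ⊗ t^s` for `x ∈ 𝔫⁺`, `h ⊗ t^s − δ_{s,0}λ(h)·1` for `h ∈ 𝔥`, and
`(x_i⁻ ⊗ 1)^{λ(h_i)+1}` for `i ∈ I`. -/
abbrev Wloc (ep em hc : Φ → L) (simple : ιI → Φ) (lam : Module.Dual ℂ L) (lamNat : Φ → ℕ) :=
  (UCA L) ⧸ Submodule.span (UCA L) (weylGens ep em hc simple lam lamNat)

/-- The cyclic generator `w_λ` of `W_loc(λ)`, the image of `1`. -/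
def wLam (ep em hc : Φ → L) (simple : ιI → Φ) (lam : Module.Dual ℂ L) (lamNat : Φ → ℕ) :
    Wloc ep em hc simple lam lamNat := Submodule.Quotient.mk 1

/-- The sum `Σ_{j ≥ k+1} ξ_j` of the parts of a partition beyond the `k`-th one (the partition
being recorded as the function `p : ℕ → ℕ` of its parts in `0`-based indexing, `p j = ξ_{j+1}`). -/
def tailSum (p : ℕ → ℕ) (k : ℕ) : ℕ := ∑ᶠ j ∈ {j : ℕ | k ≤ j}, p j

/-- `ξ = (ξ^α)_{α ∈ R⁺}` is a `λ`-compatible tuple of partitions: each `ξ^α` is a partition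
(weakly decreasing, finitely many nonzero parts) with `|ξ^α| = λ(h_α)`. -/
def IsCompatible (lamNat : Φ → ℕ) (ξ : Φ → ℕ → ℕ) : Prop :=
  ∀ α, Antitone (ξ α) ∧ (∃ N, ∀ j, N ≤ j → ξ α j = 0) ∧ ∑ᶠ j, ξ α j = lamNat α

/-- The generators `(x_α⁺ ⊗ t)^s (x_α⁻ ⊗ 1)^{s+r} w_λ`, for `α ∈ R⁺` and `s, r ≥ 1` such that
`s + r ≥ 1 + rk + Σ_{j ≥ k+1} ξ^α_j` for some `k ≥ 1`, of the submodule of `W_loc(λ)` defining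
`V(ξ)`. -/
def xiGens (ep em hc : Φ → L) (simple : ιI → Φ) (lam : Module.Dual ℂ L) (lamNat : Φ → ℕ)
    (ξ : Φ → ℕ → ℕ) : Set (Wloc ep em hc simple lam lamNat) :=
  {v | ∃ (α : Φ) (s r : ℕ), 1 ≤ s ∧ 1 ≤ r ∧
        (∃ k, 1 ≤ k ∧ s + r ≥ 1 + r * k + tailSum (ξ α) k) ∧
        v = (xt (ep α) 1 ^ s * xt (em α) 0 ^ (s + r)) • wLam ep em hc simple lam lamNat}

/-- The module `V(ξ)`. -/
abbrev VXi (ep em hc : Φ → L) (simple : ιI → Φ) (lam : Module.Dual ℂ L) (lamNat : Φ → ℕ)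
    (ξ : Φ → ℕ → ℕ) :=
  Wloc ep em hc simple lam lamNat ⧸
    Submodule.span (UCA L) (xiGens ep em hc simple lam lamNat ξ)

/-- The cyclic generator `v_ξ` of `V(ξ)`, the image of `w_λ`. -/
def vXi (ep em hc : Φ → L) (simple : ιI → Φ) (lam : Module.Dual ℂ L) (lamNat : Φ → ℕ)
    (ξ : Φ → ℕ → ℕ) : VXi ep em hc simple lam lamNat ξ :=
  Submodule.Quotient.mk (wLam ep em hc simple lam lamNat)


/-- The set `_kS(r,s)` of finitely supported sequences `(b_p)_{p≥0}` of non-negative integers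
with `Σ_p b_p = r`, `Σ_p p·b_p = s` and `b_p = 0` for all `p < k`. -/
def kS (r s k : ℕ) : Set (ℕ →₀ ℕ) :=
  {b | (b.sum fun _ m => m) = r ∧ (b.sum fun p m => p * m) = s ∧ ∀ p < k, b p = 0}

/-- The element `_k x(r,s) = Σ_{(b_p) ∈ _kS(r,s)} (x⊗t^k)^{(b_k)} ⋯ (x⊗t^s)^{(b_s)}`
of `U(𝔤[t])` (note that `b_p = 0` for `p > s` whenever `_kS(r,s) ∋ b`, so the product below
over `p = 0, …, s` agrees with the product over the support of `b`). -/
def kx (x : L) (r s k : ℕ) : UCA L :=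
  ∑ᶠ b ∈ kS r s k, ((List.range (s + 1)).map fun p => dpow (xt x p) (b p)).prod

section Aux
variable {L : Type} [LieRing L] [LieAlgebra ℂ L]

lemma xt_bracket (x y : L) (a b : ℕ) :
    xt x a * xt y b - xt y b * xt x a = xt ⁅x, y⁆ (a + b) := by
  have h := (ιU L).map_lie (x := (X ^ a : ℂ[X]) ⊗ₜ[ℂ] x) (y := (X ^ b : ℂ[X]) ⊗ₜ[ℂ] y)
  rw [LieAlgebra.ExtendScalars.bracket_tmul, Ring.lie_def] at h
  rw [← h, ← pow_add]

lemma xt_comm_self (x : L) (a b : ℕ) : Commute (xt x a) (xt x b) := by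
  have h := xt_bracket x x a b
  rw [lie_self] at h
  have h0 : xt (0 : L) (a+b) = 0 := by simp
  rw [h0, sub_eq_zero] at h
  exact h

lemma xt_smul (c : ℂ) (x : L) (a : ℕ) : xt (c • x) a = c • xt x a := by
  have h1 : ((X ^ a : ℂ[X]) ⊗ₜ[ℂ] (c • x)) = c • ((X ^ a : ℂ[X]) ⊗ₜ[ℂ] x) :=
    TensorProduct.tmul_smul c _ x
  show (ιU L) _ = _
  rw [h1]
  exact (ιU L).toLinearMap.map_smul c _

section Triple
variable {E F H : L} (t : IsSl2Triple H E F)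
include t

lemma EF_comm (a b : ℕ) : xt E a * xt F b = xt F b * xt E a + xt H (a + b) := by
  have h := xt_bracket E F a b
  rw [t.lie_e_f] at h
  rw [sub_eq_iff_eq_add] at h
  rw [h]; abel

lemma HF_comm (a b : ℕ) : xt H a * xt F b = xt F b * xt H a - (2:ℂ) • xt F (a + b) := by
  have h := xt_bracket H F a b
  rw [t.lie_h_f_nsmul] at h
  have h2 : xt (-(2 • F) : L) (a+b) = -((2:ℂ) • xt F (a+b)) := by
    rw [show (-(2 • F) : L) = ((-2 : ℂ) • F) by module, xt_smul]
    module
  rw [h2, sub_eq_iff_eq_add] at h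
  rw [h]; module

end Triple
end Aux

section Aux2
variable {L : Type} [LieRing L] [LieAlgebra ℂ L]

lemma cast_succ_ne (r : ℕ) : ((r:ℂ)+1) ≠ 0 := by
  exact Nat.cast_add_one_ne_zero r

lemma cast_fact_ne (r : ℕ) : ((r.factorial : ℕ) : ℂ) ≠ 0 :=
  Nat.cast_ne_zero.mpr (Nat.factorial_ne_zero r)

/-- Auxiliary recursive model for `kx`. -/
def yy (x : L) (k : ℕ) : ℕ → ℕ → UCA L
  | 0, s => if s = 0 then 1 else 0
  | (r+1), s => ((r+1 : ℂ))⁻¹ • ∑ p ∈ Finset.Icc k s, xt x p * yy x k r (s - p)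

lemma yy_zero (x : L) (k s : ℕ) : yy x k 0 s = if s = 0 then 1 else 0 := rfl

lemma yy_succ (x : L) (k r s : ℕ) :
    yy x k (r+1) s = ((r+1 : ℂ))⁻¹ • ∑ p ∈ Finset.Icc k s, xt x p * yy x k r (s - p) := rfl

lemma yy_succ' (x : L) (k r s : ℕ) :
    ((r+1 : ℂ)) • yy x k (r+1) s = ∑ p ∈ Finset.Icc k s, xt x p * yy x k r (s - p) := by
  rw [yy_succ, smul_smul, mul_inv_cancel₀ (cast_succ_ne r), one_smul]

@[simp] lemma dpow_zero' (u : UCA L) : dpow u 0 = 1 := by simp [dpow]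

lemma dpow_one' (u : UCA L) : dpow u 1 = u := by simp [dpow]

lemma mul_dpow (u : UCA L) (j : ℕ) :
    u * dpow u j = ((j+1 : ℂ)) • dpow u (j+1) := by
  rw [dpow, dpow, smul_smul, Nat.factorial_succ, pow_succ']
  rw [Nat.cast_mul, mul_inv, ← mul_assoc, Nat.cast_add, Nat.cast_one,
    mul_inv_cancel₀ (cast_succ_ne j), one_mul, Algebra.mul_smul_comm]

lemma pow_eq_dpow (u : UCA L) (r : ℕ) : u ^ r = ((r.factorial : ℂ)) • dpow u r := by
  rw [dpow, smul_smul, mul_inv_cancel₀ (cast_fact_ne r), one_smul]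

lemma xt_comm_yy (x : L) (q k r s : ℕ) : Commute (xt x q) (yy x k r s) := by
  induction r generalizing s with
  | zero =>
    rw [yy_zero]
    split
    · exact Commute.one_right _
    · exact Commute.zero_right _
  | succ r ih =>
    rw [yy_succ]
    exact (Commute.sum_right _ _ _ fun p _ =>
      Commute.mul_right (xt_comm_self x q p) (ih _)).smul_right _

lemma dpow_comm_yy (x : L) (q j k r s : ℕ) : Commute (dpow (xt x q) j) (yy x k r s) :=
  (((xt_comm_yy x q k r s).pow_left j).smul_left _)

lemma yy_eq_zero_of_lt (x : L) (k r s : ℕ) (hr : 1 ≤ r) (hs : s < k * r) :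
    yy x k r s = 0 := by
  induction r generalizing s with
  | zero => omega
  | succ r ih =>
    have hmul : k * (r+1) = k * r + k := by ring
    rw [yy_succ]
    rw [Finset.sum_eq_zero, smul_zero]
    intro p hp
    simp only [Finset.mem_Icc] at hp
    rcases Nat.eq_zero_or_pos r with h0 | h1
    · subst h0
      exfalso
      omega
    · rw [ih (s - p) h1 (by omega), mul_zero]

lemma yy_zero_right (x : L) (k r : ℕ) (hr : 1 ≤ r) (hk : 1 ≤ k) : yy x k r 0 = 0 :=
  yy_eq_zero_of_lt x k r 0 hr (by positivity)

lemma yy_pure (x : L) (k r : ℕ) : yy x k r (k * r) = dpow (xt x k) r := by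
  induction r with
  | zero => simp [yy_zero]
  | succ r ih =>
    have hmul : k * (r+1) = k * r + k := by ring
    have h : ∀ p ∈ Finset.Icc k (k * (r+1)), xt x p * yy x k r (k * (r+1) - p)
        = if p = k then xt x k * yy x k r (k * r) else 0 := by
      intro p hp
      simp only [Finset.mem_Icc] at hp
      rcases eq_or_ne p k with h | h
      · subst h; rw [if_pos rfl]
        congr 2
        omega
      · rw [if_neg h]
        rcases Nat.eq_zero_or_pos r with h0 | h1
        · exfalso; rw [h0] at hp hmul; omega
        · rw [yy_eq_zero_of_lt x k r _ h1 (by omega), mul_zero]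
    rw [yy_succ, Finset.sum_congr rfl h, Finset.sum_ite_eq' (Finset.Icc k (k*(r+1))) k]
    rw [if_pos (by simp only [Finset.mem_Icc]; omega), ih, mul_dpow]
    rw [smul_smul, inv_mul_cancel₀ (cast_succ_ne r), one_smul]
end Aux2

section Aux3
variable {L : Type} [LieRing L] [LieAlgebra ℂ L]

lemma dpow_comm_xt (x : L) (q j p : ℕ) : Commute (dpow (xt x q) j) (xt x p) :=
  (((xt_comm_self x p q).pow_right j).smul_right _).symm

set_option maxHeartbeats 2000000 in
lemma yy_split (x : L) (k : ℕ) : ∀ r s : ℕ, yy x k r s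
    = ∑ j ∈ Finset.range (r+1),
        (if j * k ≤ s then dpow (xt x k) j * yy x (k+1) (r-j) (s - j*k) else 0) := by
  intro r
  induction r with
  | zero =>
    intro s
    rw [Finset.sum_range_one]
    simp only [Nat.zero_mul, Nat.zero_le, if_true, Nat.sub_zero, dpow_zero', one_mul]
    rfl
  | succ r ih =>
    intro s
    rcases lt_or_ge s k with hsk | hks
    · -- s < k : both sides vanish
      have h1 : k ≤ k * (r+1) := Nat.le_mul_of_pos_right k (by omega)
      have h2 : k+1 ≤ (k+1) * (r+1) := Nat.le_mul_of_pos_right (k+1) (by omega)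
      rw [yy_eq_zero_of_lt x k (r+1) s (by omega) (by omega)]
      rw [Finset.sum_eq_zero]
      intro j hj
      rcases Nat.eq_zero_or_pos j with h0 | hj1
      · subst h0
        rw [if_pos (by omega)]
        simp only [Nat.sub_zero, Nat.zero_mul, Nat.zero_le]
        rw [yy_eq_zero_of_lt x (k+1) (r+1) s (by omega) (by omega), mul_zero]
      · have h3 : k ≤ j * k := Nat.le_mul_of_pos_left k hj1
        rw [if_neg (by omega)]
    · -- main case k ≤ s
      apply smul_right_injective (UCA L) (cast_succ_ne r)
      show ((r:ℂ)+1) • _ = ((r:ℂ)+1) • _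
      have hins : Finset.Icc k s = insert k (Finset.Icc (k+1) s) := by
        ext a
        simp only [Finset.mem_Icc, Finset.mem_insert]
        omega
      have hknotin : k ∉ Finset.Icc (k+1) s := by
        simp only [Finset.mem_Icc]
        omega
      have LHS1 : ((r:ℂ)+1) • yy x k (r+1) s
          = xt x k * yy x k r (s - k) + ∑ p ∈ Finset.Icc (k+1) s, xt x p * yy x k r (s - p) := by
        have := yy_succ' x k r s
        rw [hins, Finset.sum_insert hknotin] at this
        exact_mod_cast this
      -- the `Tk` term
      have Tk : xt x k * yy x k r (s - k)
          = ∑ j ∈ Finset.range (r+1), ((j:ℂ)+1) •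
              (if (j+1) * k ≤ s then dpow (xt x k) (j+1) * yy x (k+1) (r-j) (s - (j+1)*k) else 0) := by
        rw [ih (s-k), Finset.mul_sum]
        refine Finset.sum_congr rfl fun j hj => ?_
        have hguard : j * k ≤ s - k ↔ (j+1) * k ≤ s := by
          constructor <;> intro h <;> [nlinarith [Nat.sub_add_cancel hks]; skip]
          · have : (j+1)*k = j*k + k := by ring
            omega
        rw [mul_ite, mul_zero]
        rcases le_or_gt ((j+1)*k) s with hg | hg
        · rw [if_pos hg, if_pos (hguard.mpr hg)]
          rw [← mul_assoc, mul_dpow, Algebra.smul_mul_assoc]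
          congr 3
          have : (j+1)*k = j*k + k := by ring
          omega
        · rw [if_neg (by omega), if_neg (fun h => by omega)]
          simp
      -- second piece of the LHS
      have P2 : ∑ p ∈ Finset.Icc (k+1) s, xt x p * yy x k r (s - p)
          = ∑ j ∈ Finset.range (r+1),
              (if j * k ≤ s then dpow (xt x k) j *
                ∑ p ∈ Finset.Icc (k+1) (s - j*k), xt x p * yy x (k+1) (r-j) ((s - j*k) - p)
               else 0) := by
        have step1 : ∀ p ∈ Finset.Icc (k+1) s, xt x p * yy x k r (s - p)
            = ∑ j ∈ Finset.range (r+1), (if j * k ≤ s - p then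
                xt x p * (dpow (xt x k) j * yy x (k+1) (r-j) (s - p - j*k)) else 0) := by
          intro p hp
          rw [ih (s-p), Finset.mul_sum]
          refine Finset.sum_congr rfl fun j hj => ?_
          rw [mul_ite, mul_zero]
        rw [Finset.sum_congr rfl step1, Finset.sum_comm]
        refine Finset.sum_congr rfl fun j hj => ?_
        rcases le_or_gt (j*k) s with hg | hg
        · rw [if_pos hg, Finset.mul_sum]
          rw [← Finset.sum_subset (Finset.Icc_subset_Icc_right (Nat.sub_le s (j*k)))
            (by
              intro p hp hnp
              simp only [Finset.mem_Icc] at hp hnp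
              have h5 : j*k + (s - j*k) = s := Nat.add_sub_cancel' hg
              rw [if_neg (by omega)])]
          refine Finset.sum_congr rfl fun p hp => ?_
          simp only [Finset.mem_Icc] at hp
          have h5 : j*k + (s - j*k) = s := Nat.add_sub_cancel' hg
          have h6 : s - p - j*k = s - j*k - p := by omega
          rw [if_pos (by omega), h6, ← mul_assoc, ← (dpow_comm_xt x k j p).eq, mul_assoc]
        · rw [if_neg (by omega), Finset.sum_eq_zero]
          intro p hp
          simp only [Finset.mem_Icc] at hp
          rw [if_neg (by omega)]
      -- the RHS, decomposed
      have RHSsplit : ((r:ℂ)+1) • ∑ j ∈ Finset.range (r+2),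
            (if j * k ≤ s then dpow (xt x k) j * yy x (k+1) (r+1-j) (s - j*k) else 0)
          = (∑ j ∈ Finset.range (r+2), (j:ℂ) •
              (if j * k ≤ s then dpow (xt x k) j * yy x (k+1) (r+1-j) (s - j*k) else 0))
            + ∑ j ∈ Finset.range (r+2), (((r+1-j : ℕ)):ℂ) •
              (if j * k ≤ s then dpow (xt x k) j * yy x (k+1) (r+1-j) (s - j*k) else 0) := by
        rw [Finset.smul_sum, ← Finset.sum_add_distrib]
        refine Finset.sum_congr rfl fun j hj => ?_
        rw [← add_smul]
        congr 1
        simp only [Finset.mem_range] at hj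
        have : ((r+1-j : ℕ) : ℂ) = ((r+1 : ℕ) : ℂ) - (j:ℂ) := by
          rw [Nat.cast_sub (by omega)]
        rw [this]
        push_cast
        ring
      have SumA : ∑ j ∈ Finset.range (r+2), (j:ℂ) •
            (if j * k ≤ s then dpow (xt x k) j * yy x (k+1) (r+1-j) (s - j*k) else 0)
          = xt x k * yy x k r (s - k) := by
        rw [Finset.sum_range_succ', Tk]
        simp only [Nat.cast_zero, zero_smul, add_zero]
        refine Finset.sum_congr rfl fun j hj => ?_
        have hred : r + 1 - (j+1) = r - j := by omega
        rw [hred]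
        push_cast
        rfl
      have SumB : ∑ j ∈ Finset.range (r+2), (((r+1-j : ℕ)):ℂ) •
            (if j * k ≤ s then dpow (xt x k) j * yy x (k+1) (r+1-j) (s - j*k) else 0)
          = ∑ j ∈ Finset.range (r+1),
              (if j * k ≤ s then dpow (xt x k) j *
                ∑ p ∈ Finset.Icc (k+1) (s - j*k), xt x p * yy x (k+1) (r-j) ((s - j*k) - p)
               else 0) := by
        rw [Finset.sum_range_succ]
        simp only [Nat.sub_self, Nat.cast_zero, zero_smul, add_zero]
        refine Finset.sum_congr rfl fun j hj => ?_
        simp only [Finset.mem_range] at hj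
        have h1 : r + 1 - j = (r - j) + 1 := by omega
        have h2 : ((r+1-j : ℕ) : ℂ) = ((r-j : ℕ) : ℂ) + 1 := by
          rw [h1]; push_cast; ring
        rw [smul_ite, smul_zero, h2, h1]
        rcases le_or_gt (j*k) s with hg | hg
        · rw [if_pos hg, if_pos hg, ← mul_smul_comm, yy_succ']
        · rw [if_neg (by omega), if_neg (by omega)]
      rw [LHS1, RHSsplit, SumA, SumB, P2]
end Aux3

section Aux4
variable {L : Type} [LieRing L] [LieAlgebra ℂ L]

lemma sum_Icc_swap {M : Type} [AddCommMonoid M] (F : ℕ → ℕ → M) (k s : ℕ) :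
    ∑ q ∈ Finset.Icc k s, ∑ p ∈ Finset.Icc k (s - q), F q p
      = ∑ p ∈ Finset.Icc k s, ∑ q ∈ Finset.Icc k (s - p), F q p := by
  have key : ∀ (G : ℕ → ℕ → M), ∑ q ∈ Finset.Icc k s, ∑ p ∈ Finset.Icc k (s - q), G q p
      = ∑ q ∈ Finset.Icc k s, ∑ p ∈ Finset.Icc k s, (if p + q ≤ s then G q p else 0) := by
    intro G
    refine Finset.sum_congr rfl fun q hq => ?_
    simp only [Finset.mem_Icc] at hq
    rw [← Finset.sum_subset (Finset.Icc_subset_Icc_right (Nat.sub_le s q))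
      (by
        intro p hp hnp
        simp only [Finset.mem_Icc] at hp hnp
        rw [if_neg (by omega)])]
    refine Finset.sum_congr rfl fun p hp => ?_
    simp only [Finset.mem_Icc] at hp
    rw [if_pos (by omega)]
  rw [key F, key (fun a b => F b a), Finset.sum_comm]
  exact Finset.sum_congr rfl fun p _ => Finset.sum_congr rfl fun q _ =>
    if_congr (by omega) rfl rfl

lemma sum_Icc_diag {M : Type} [AddCommMonoid M] : ∀ (s : ℕ) (G : ℕ → M),
    ∑ q ∈ Finset.Icc 0 s, ∑ p ∈ Finset.Icc 0 (s - q), G (q + p)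
      = ∑ d ∈ Finset.Icc 0 s, (d+1) • G d := by
  intro s
  induction s with
  | zero => intro G; simp
  | succ s ih =>
    intro G
    rw [Finset.sum_Icc_succ_top (Nat.zero_le (s+1)), Finset.sum_Icc_succ_top (Nat.zero_le (s+1))]
    have hq : ∀ q ∈ Finset.Icc 0 s, ∑ p ∈ Finset.Icc 0 (s + 1 - q), G (q + p)
        = (∑ p ∈ Finset.Icc 0 (s - q), G (q + p)) + G (s+1) := by
      intro q hq
      simp only [Finset.mem_Icc] at hq
      have h1 : s + 1 - q = (s - q) + 1 := by omega
      rw [h1, Finset.sum_Icc_succ_top (Nat.zero_le _)]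
      congr 2
      omega
    rw [Finset.sum_congr rfl hq, Finset.sum_add_distrib, ih, Finset.sum_const, Nat.card_Icc]
    simp only [Nat.sub_self, Finset.Icc_self, Finset.sum_singleton, Nat.add_zero, Nat.sub_zero]
    rw [succ_nsmul (G (s+1)) (s+1)]
    abel

lemma sum_delta (x : L) (k s : ℕ) (G : ℕ → UCA L) :
    ∑ p ∈ Finset.Icc k s, G p * yy x k 0 (s - p) = if k ≤ s then G s else 0 := by
  have h : ∀ p ∈ Finset.Icc k s, G p * yy x k 0 (s - p) = if p = s then G s else 0 := by
    intro p hp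
    simp only [Finset.mem_Icc] at hp
    rw [yy_zero]
    rcases eq_or_ne p s with h | h
    · subst h; rw [if_pos rfl, if_pos (by omega), mul_one]
    · rw [if_neg (by omega), if_neg h, mul_zero]
  rw [Finset.sum_congr rfl h, Finset.sum_ite_eq' (Finset.Icc k s) s]
  rcases le_or_gt k s with h | h
  · rw [if_pos (by simp only [Finset.mem_Icc]; omega), if_pos h]
  · rw [if_neg (by simp only [Finset.mem_Icc]; omega), if_neg (by omega)]

lemma yy_one (x : L) (k s : ℕ) : yy x k 1 s = if k ≤ s then xt x s else 0 := by
  rw [show (1:ℕ) = 0 + 1 from rfl, yy_succ, sum_delta]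
  norm_num

/-- the weighted recursion -/
lemma yy_weighted (x : L) (k : ℕ) : ∀ (r S : ℕ),
    ∑ p ∈ Finset.Icc k S, (p:ℂ) • (xt x p * yy x k r (S - p)) = (S:ℂ) • yy x k (r+1) S := by
  intro r
  induction r with
  | zero =>
    intro S
    have h : ∀ p ∈ Finset.Icc k S, (p:ℂ) • (xt x p * yy x k 0 (S - p))
        = ((p:ℂ) • xt x p) * yy x k 0 (S-p) := by
      intro p hp
      rw [Algebra.smul_mul_assoc]
    rw [Finset.sum_congr rfl h, sum_delta x k S (fun p => (p:ℂ) • xt x p), yy_one, smul_ite, smul_zero]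
  | succ r ih =>
    intro S
    apply smul_right_injective (UCA L) (cast_succ_ne (r+1))
    show ((↑(r+1):ℂ)+1) • _ = ((↑(r+1):ℂ)+1) • _
    have hR : ((↑(r+1):ℂ)+1) • ((S:ℂ) • yy x k (r+2) S)
        = (S:ℂ) • ∑ q ∈ Finset.Icc k S, xt x q * yy x k (r+1) (S - q) := by
      rw [smul_comm, yy_succ' x k (r+1) S]
    have hsplit : (S:ℂ) • ∑ q ∈ Finset.Icc k S, xt x q * yy x k (r+1) (S - q)
        = (∑ q ∈ Finset.Icc k S, (q:ℂ) • (xt x q * yy x k (r+1) (S - q)))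
          + ∑ q ∈ Finset.Icc k S, xt x q * (((S - q : ℕ):ℂ) • yy x k (r+1) (S - q)) := by
      rw [Finset.smul_sum, ← Finset.sum_add_distrib]
      refine Finset.sum_congr rfl fun q hq => ?_
      simp only [Finset.mem_Icc] at hq
      rw [mul_smul_comm, ← add_smul]
      congr 1
      have : ((S - q : ℕ):ℂ) = (S:ℂ) - (q:ℂ) := by rw [Nat.cast_sub (by omega)]
      rw [this]; ring
    have hsec : ∑ q ∈ Finset.Icc k S, xt x q * (((S - q : ℕ):ℂ) • yy x k (r+1) (S - q))
        = ((r:ℂ)+1) • ∑ p ∈ Finset.Icc k S, (p:ℂ) • (xt x p * yy x k (r+1) (S - p)) := by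
      have h1 : ∀ q ∈ Finset.Icc k S, xt x q * (((S - q : ℕ):ℂ) • yy x k (r+1) (S - q))
          = ∑ p ∈ Finset.Icc k (S - q), (p:ℂ) • (xt x q * (xt x p * yy x k r (S - q - p))) := by
        intro q hq
        rw [← ih (S - q), Finset.mul_sum]
        refine Finset.sum_congr rfl fun p hp => ?_
        rw [mul_smul_comm]
      rw [Finset.sum_congr rfl h1, sum_Icc_swap (fun q p => (p:ℂ) • (xt x q * (xt x p * yy x k r (S - q - p)))) k S]
      rw [Finset.smul_sum]
      refine Finset.sum_congr rfl fun p hp => ?_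
      simp only [Finset.mem_Icc] at hp
      have h2 : ∀ q ∈ Finset.Icc k (S - p), (p:ℂ) • (xt x q * (xt x p * yy x k r (S - q - p)))
          = (p:ℂ) • (xt x p * (xt x q * yy x k r ((S - p) - q))) := by
        intro q hq
        simp only [Finset.mem_Icc] at hq
        have h3 : S - q - p = S - p - q := by omega
        rw [← mul_assoc, (xt_comm_self x q p).eq, mul_assoc, h3]
      rw [Finset.sum_congr rfl h2, ← Finset.smul_sum, ← Finset.mul_sum, ← yy_succ' x k r (S-p),
        mul_smul_comm, smul_comm ((p:ℂ)) ((r:ℂ)+1)]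
    rw [hR, hsplit, hsec]
    push_cast
    module

/-- commuting `h ⊗ t^m` through `yy` -/
lemma H_mul_yy {E F H : L} (t : IsSl2Triple H E F) (m : ℕ) (k : ℕ) : ∀ (r s : ℕ),
    xt H m * yy F k (r+1) s = yy F k (r+1) s * xt H m
      - (2:ℂ) • ∑ p ∈ Finset.Icc k s, xt F (m+p) * yy F k r (s - p) := by
  intro r
  induction r with
  | zero =>
    intro s
    rw [yy_one, sum_delta F k s (fun p => xt F (m + p))]
    rcases le_or_gt k s with h | h
    · rw [if_pos h, if_pos h, HF_comm t]
    · rw [if_neg (by omega), if_neg (by omega)]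
      simp
  | succ r ih =>
    intro s
    apply smul_right_injective (UCA L) (cast_succ_ne (r+1))
    show ((↑(r+1):ℂ)+1) • _ = ((↑(r+1):ℂ)+1) • _
    have hL : ((↑(r+1):ℂ)+1) • (xt H m * yy F k (r+2) s)
        = ∑ q ∈ Finset.Icc k s, xt H m * (xt F q * yy F k (r+1) (s - q)) := by
      rw [← mul_smul_comm, yy_succ', Finset.mul_sum]
    have hcross : ∑ q ∈ Finset.Icc k s, xt F q * ∑ p ∈ Finset.Icc k (s-q), xt F (m+p) * yy F k r (s - q - p)
        = ((r:ℂ)+1) • ∑ p ∈ Finset.Icc k s, xt F (m+p) * yy F k (r+1) (s - p) := by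
      have h1 : ∀ q ∈ Finset.Icc k s, xt F q * ∑ p ∈ Finset.Icc k (s-q), xt F (m+p) * yy F k r (s - q - p)
          = ∑ p ∈ Finset.Icc k (s-q), xt F q * (xt F (m+p) * yy F k r (s - q - p)) := by
        intro q hq
        rw [Finset.mul_sum]
      rw [Finset.sum_congr rfl h1,
        sum_Icc_swap (fun q p => xt F q * (xt F (m+p) * yy F k r (s - q - p))) k s]
      rw [Finset.smul_sum]
      refine Finset.sum_congr rfl fun p hp => ?_
      simp only [Finset.mem_Icc] at hp
      have h2 : ∀ q ∈ Finset.Icc k (s - p), xt F q * (xt F (m+p) * yy F k r (s - q - p))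
          = xt F (m+p) * (xt F q * yy F k r ((s - p) - q)) := by
        intro q hq
        simp only [Finset.mem_Icc] at hq
        have h3 : s - q - p = s - p - q := by omega
        rw [← mul_assoc, (xt_comm_self F q (m+p)).eq, mul_assoc, h3]
      rw [Finset.sum_congr rfl h2, ← Finset.mul_sum, ← yy_succ' F k r (s-p), mul_smul_comm]
    have hterm : ∀ q ∈ Finset.Icc k s, xt H m * (xt F q * yy F k (r+1) (s - q))
        = xt F q * yy F k (r+1) (s-q) * xt H m
          - (2:ℂ) • (xt F q * ∑ p ∈ Finset.Icc k (s-q), xt F (m+p) * yy F k r (s - q - p))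
          - (2:ℂ) • (xt F (m+q) * yy F k (r+1) (s-q)) := by
      intro q hq
      rw [← mul_assoc, HF_comm t, sub_mul, mul_assoc, ih (s-q)]
      rw [Algebra.smul_mul_assoc, mul_sub, mul_smul_comm, mul_assoc]
    rw [hL, Finset.sum_congr rfl hterm]
    rw [Finset.sum_sub_distrib, Finset.sum_sub_distrib, ← Finset.sum_mul, ← yy_succ',
      ← Finset.smul_sum, ← Finset.smul_sum, hcross, Algebra.smul_mul_assoc]
    push_cast
    module

end Aux4

section Aux5
variable {L : Type} [LieRing L] [LieAlgebra ℂ L]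
variable {W : Type} [AddCommGroup W] [Module ℂ W] [Module (UCA L) W]
  [IsScalarTower ℂ (UCA L) W]

lemma csmul_act (c : ℂ) (u : UCA L) (v : W) : (c • u) • v = c • (u • v) :=
  smul_assoc c u v

lemma act_csmul (u : UCA L) (c : ℂ) (v : W) : u • (c • v) = c • (u • v) := by
  have h1 : c • v = (c • (1 : UCA L)) • v := by rw [csmul_act, one_smul]
  rw [h1, ← mul_smul, mul_smul_comm, mul_one, csmul_act]

lemma sum_shift {M : Type} [AddCommMonoid M] (f : ℕ → M) (s : ℕ) :
    ∑ m ∈ Finset.Icc 1 (s+1), f m = ∑ d ∈ Finset.Icc 0 s, f (d+1) := by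
  rw [← Finset.map_add_right_Icc 0 s 1, Finset.sum_map]
  rfl

lemma diag_identity (F : L) (r s : ℕ) :
    ∑ q ∈ Finset.Icc 0 s, ∑ p ∈ Finset.Icc 0 (s - q), xt F (1+q+p) * yy F 0 r (s - q - p)
      = ∑ m ∈ Finset.Icc 0 (s+1), (m:ℂ) • (xt F m * yy F 0 r (s+1-m)) := by
  have h1 : ∀ q ∈ Finset.Icc 0 s, ∑ p ∈ Finset.Icc 0 (s - q), xt F (1+q+p) * yy F 0 r (s - q - p)
      = ∑ p ∈ Finset.Icc 0 (s - q), (fun d => xt F (1+d) * yy F 0 r (s - d)) (q + p) := by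
    intro q hq
    refine Finset.sum_congr rfl fun p hp => ?_
    simp only []
    congr 2
    · omega
    · omega
  rw [Finset.sum_congr rfl h1, sum_Icc_diag s (fun d => xt F (1+d) * yy F 0 r (s - d))]
  have hins : Finset.Icc 0 (s+1) = insert 0 (Finset.Icc 1 (s+1)) := by
    ext a
    simp only [Finset.mem_Icc, Finset.mem_insert]
    omega
  rw [hins, Finset.sum_insert (by simp), Nat.cast_zero, zero_smul, zero_add]
  rw [sum_shift (fun m => (m:ℂ) • (xt F m * yy F 0 r (s+1-m))) s]
  refine Finset.sum_congr rfl fun d hd => ?_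
  simp only [Finset.mem_Icc] at hd
  have e1 : (1:ℕ) + d = d + 1 := by omega
  have e2 : s - d = s + 1 - (d+1) := by omega
  rw [← Nat.cast_smul_eq_nsmul ℂ (d+1), e1, e2]

lemma combine_identity (F : L) (r s : ℕ) :
    (∑ q ∈ Finset.Icc 0 (s+1), (-(((s+1-q : ℕ)):ℂ)) • (xt F q * yy F 0 r (s+1-q)))
      + (-2:ℂ) • ∑ m ∈ Finset.Icc 0 (s+1), (m:ℂ) • (xt F m * yy F 0 r (s+1-m))
      = ((((r:ℕ):ℂ)+2) * (-(((s+1:ℕ)):ℂ))) • yy F 0 (r+1) (s+1) := by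
  rw [Finset.smul_sum, ← Finset.sum_add_distrib]
  have h1 : ∀ q ∈ Finset.Icc 0 (s+1),
      (-(((s+1-q : ℕ)):ℂ)) • (xt F q * yy F 0 r (s+1-q))
        + (-2:ℂ) • ((q:ℂ) • (xt F q * yy F 0 r (s+1-q)))
      = (-((s+1:ℕ):ℂ)) • (xt F q * yy F 0 r (s+1-q))
        + (-1:ℂ) • ((q:ℂ) • (xt F q * yy F 0 r (s+1-q))) := by
    intro q hq
    simp only [Finset.mem_Icc] at hq
    rw [smul_smul, smul_smul, ← add_smul, ← add_smul]
    congr 1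
    have : ((s+1-q : ℕ):ℂ) = ((s+1:ℕ):ℂ) - (q:ℂ) := by
      rw [Nat.cast_sub (by omega)]
    rw [this]
    push_cast
    ring
  rw [Finset.sum_congr rfl h1, Finset.sum_add_distrib, ← Finset.smul_sum, ← Finset.smul_sum]
  rw [← yy_succ' F 0 r (s+1), yy_weighted F 0 r (s+1)]
  rw [smul_smul, smul_smul, ← add_smul]
  congr 1
  push_cast
  ring

lemma E_yy {E F H : L} (t : IsSl2Triple H E F) (w : W)
    (hEw : ∀ m, xt E m • w = 0) (hHw : ∀ m, 1 ≤ m → xt H m • w = 0) :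
    ∀ r s : ℕ, (xt E 1 * yy F 0 (r+1) s) • w
      = ((-(((s+1 : ℕ)):ℂ)) • yy F 0 r (s+1)) • w := by
  intro r
  induction r with
  | zero =>
    intro s
    rw [yy_one, if_pos (Nat.zero_le s), EF_comm t 1 s]
    rw [add_smul, mul_smul, hEw 1, smul_zero, hHw (1+s) (by omega), zero_add]
    rw [yy_zero, if_neg (by omega), smul_zero, zero_smul]
  | succ r ih =>
    intro s
    apply smul_right_injective W (cast_succ_ne (r+1))
    show ((↑(r+1):ℂ)+1) • _ = ((↑(r+1):ℂ)+1) • _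
    have hL : ((↑(r+1):ℂ)+1) • ((xt E 1 * yy F 0 (r+2) s) • w)
        = ∑ q ∈ Finset.Icc 0 s, (xt E 1 * (xt F q * yy F 0 (r+1) (s - q))) • w := by
      rw [← csmul_act, ← mul_smul_comm, yy_succ', Finset.mul_sum, Finset.sum_smul]
    have hterm : ∀ q ∈ Finset.Icc 0 s, (xt E 1 * (xt F q * yy F 0 (r+1) (s - q))) • w
        = ((-(((s+1-q : ℕ)):ℂ)) • (xt F q * yy F 0 r (s+1-q))) • w
          + ((-2 : ℂ) • ∑ p ∈ Finset.Icc 0 (s-q), xt F (1+q+p) * yy F 0 r (s - q - p)) • w := by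
      intro q hq
      simp only [Finset.mem_Icc] at hq
      have h5 : s - q + 1 = s + 1 - q := by omega
      rw [← mul_assoc, EF_comm t 1 q, add_mul, add_smul, mul_assoc, mul_smul, ih (s - q)]
      rw [H_mul_yy t (1+q) 0 r (s-q), sub_smul, mul_smul,
        hHw (1+q) (by omega), smul_zero, zero_sub]
      rw [h5]
      rw [csmul_act, csmul_act, act_csmul, ← mul_smul, csmul_act]
      rw [← neg_smul (2:ℂ)]
      rw [csmul_act]
    rw [hL, Finset.sum_congr rfl hterm, Finset.sum_add_distrib, ← Finset.sum_smul, ← Finset.sum_smul]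
    -- extend the first sum to `Icc 0 (s+1)`
    have hext : ∑ q ∈ Finset.Icc 0 s, (-(((s+1-q : ℕ)):ℂ)) • (xt F q * yy F 0 r (s+1-q))
        = ∑ q ∈ Finset.Icc 0 (s+1), (-(((s+1-q : ℕ)):ℂ)) • (xt F q * yy F 0 r (s+1-q)) := by
      rw [Finset.sum_Icc_succ_top (Nat.zero_le (s+1))]
      simp only [Nat.sub_self, Nat.cast_zero, neg_zero, zero_smul, add_zero]
    have hswap : ∑ q ∈ Finset.Icc 0 s, ((-2 : ℂ) • ∑ p ∈ Finset.Icc 0 (s-q), xt F (1+q+p) * yy F 0 r (s - q - p))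
        = (-2:ℂ) • ∑ m ∈ Finset.Icc 0 (s+1), (m:ℂ) • (xt F m * yy F 0 r (s+1-m)) := by
      rw [← Finset.smul_sum, diag_identity]
    rw [hext, hswap, ← add_smul, combine_identity]
    rw [csmul_act, csmul_act, smul_smul]
    congr 1
    push_cast
    ring

/-- Garland's identity, on `w`. -/
lemma garland_w {E F H : L} (t : IsSl2Triple H E F) (w : W)
    (hEw : ∀ m, xt E m • w = 0) (hHw : ∀ m, 1 ≤ m → xt H m • w = 0) :
    ∀ s r : ℕ, (dpow (xt E 1) s * dpow (xt F 0) (s+r)) • w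
      = (((-1:ℂ))^s • yy F 0 r s) • w := by
  intro s
  induction s with
  | zero =>
    intro r
    rw [dpow_zero', one_mul, pow_zero, one_smul]
    rw [show yy F 0 r 0 = dpow (xt F 0) r from by
      have := yy_pure F 0 r
      rwa [Nat.zero_mul] at this]
    rw [Nat.zero_add]
  | succ s ih =>
    intro r
    have hih : (dpow (xt E 1) s * dpow (xt F 0) (s+1+r)) • w
        = ((-1:ℂ))^s • (yy F 0 (r+1) s • w) := by
      rw [show s+1+r = s+(r+1) from by omega, ih (r+1), csmul_act]
    apply smul_right_injective W (cast_succ_ne s)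
    show ((s:ℂ)+1) • _ = ((s:ℂ)+1) • _
    calc ((s:ℂ)+1) • ((dpow (xt E 1) (s+1) * dpow (xt F 0) (s+1+r)) • w)
        = ((((s:ℂ)+1) • dpow (xt E 1) (s+1) * dpow (xt F 0) (s+1+r))) • w := by
          rw [← csmul_act, Algebra.smul_mul_assoc]
      _ = ((xt E 1 * dpow (xt E 1) s * dpow (xt F 0) (s+1+r))) • w := by
          rw [mul_dpow]
      _ = xt E 1 • ((dpow (xt E 1) s * dpow (xt F 0) (s+1+r)) • w) := by
          rw [mul_assoc, mul_smul]
      _ = ((-1:ℂ))^s • ((xt E 1 * yy F 0 (r+1) s) • w) := by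
          rw [hih, act_csmul, ← mul_smul]
      _ = ((-1:ℂ))^s • ((-(((s+1:ℕ)):ℂ)) • (yy F 0 r (s+1) • w)) := by
          rw [E_yy t w hEw hHw r s, csmul_act]
      _ = ((s:ℂ)+1) • (((-1:ℂ))^(s+1) • yy F 0 r (s+1)) • w := by
          rw [smul_smul, csmul_act ((-1:ℂ)^(s+1)) (yy F 0 r (s+1)) w, smul_smul]
          congr 1
          rw [pow_succ]
          push_cast
          ring
end Aux5

section Aux6
variable {L : Type} [LieRing L] [LieAlgebra ℂ L]

/-- the finset version of `kS`. -/
def KSF (r s k : ℕ) : Finset (ℕ →₀ ℕ) :=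
  ((Finset.range (s+1)).finsuppAntidiag r).filter
    (fun b => (b.sum fun p m => p*m) = s ∧ ∀ p < k, b p = 0)

lemma weight_le (b : ℕ →₀ ℕ) (p : ℕ) : p * b p ≤ (b.sum fun p m => p*m) := by
  rcases eq_or_ne (b p) 0 with h | h
  · simp [h]
  · exact Finset.single_le_sum (f := fun q => q * b q) (fun q _ => Nat.zero_le _)
      (Finsupp.mem_support_iff.mpr h)

lemma count_le (b : ℕ →₀ ℕ) (p : ℕ) : b p ≤ (b.sum fun _ m => m) := by
  rcases eq_or_ne (b p) 0 with h | h
  · simp [h]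
  · exact Finset.single_le_sum (f := fun q => b q) (fun q _ => Nat.zero_le _)
      (Finsupp.mem_support_iff.mpr h)

lemma sum_erase_aux (k : ℕ) (b : ℕ →₀ ℕ) (g : ℕ → ℕ → ℕ) (hg : ∀ p, g p 0 = 0)
    (hadd : ∀ p m1 m2, g p (m1+m2) = g p m1 + g p m2) :
    b.sum g = g k (b k) + (b.erase k).sum g := by
  conv_lhs => rw [← Finsupp.single_add_erase k b]
  rw [Finsupp.sum_add_index' hg hadd, Finsupp.sum_single_index (hg k)]

lemma mem_KSF {r s k : ℕ} {b : ℕ →₀ ℕ} : b ∈ KSF r s k ↔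
    (b.sum fun _ m => m) = r ∧ (b.sum fun p m => p*m) = s ∧ ∀ p < k, b p = 0 := by
  rw [KSF, Finset.mem_filter, Finset.mem_finsuppAntidiag']
  constructor
  · rintro ⟨⟨h1, _⟩, h2, h3⟩
    exact ⟨h1, h2, h3⟩
  · rintro ⟨h1, h2, h3⟩
    refine ⟨⟨h1, ?_⟩, h2, h3⟩
    intro p hp
    simp only [Finset.mem_range]
    have hw := weight_le b p
    rw [h2] at hw
    have hbp : b p ≠ 0 := Finsupp.mem_support_iff.mp hp
    nlinarith [Nat.one_le_iff_ne_zero.mpr hbp]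

lemma kS_eq_KSF (r s k : ℕ) : kS r s k = ↑(KSF r s k) := by
  ext b
  rw [Finset.mem_coe, mem_KSF]
  rfl

/-- list product of divided powers -/
def PR (x : L) (n : ℕ) (b : ℕ →₀ ℕ) : UCA L :=
  ((List.range n).map fun p => dpow (xt x p) (b p)).prod

lemma kx_eq_sum (x : L) (r s k : ℕ) :
    kx x r s k = ∑ b ∈ KSF r s k, PR x (s+1) b := by
  rw [kx, kS_eq_KSF, finsum_mem_coe_finset]
  rfl

lemma PR_succ (x : L) (n : ℕ) (b : ℕ →₀ ℕ) :
    PR x (n+1) b = PR x n b * dpow (xt x n) (b n) := by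
  rw [PR, PR, List.range_succ, List.map_append, List.prod_append]
  simp

lemma PR_congr (x : L) (n : ℕ) {a b : ℕ →₀ ℕ} (h : ∀ p < n, a p = b p) :
    PR x n a = PR x n b := by
  induction n with
  | zero => rfl
  | succ n ih =>
    rw [PR_succ, PR_succ, ih (fun p hp => h p (by omega)), h n (by omega)]

lemma dpow_comm_PR (x : L) (q j : ℕ) (n : ℕ) (b : ℕ →₀ ℕ) :
    Commute (dpow (xt x q) j) (PR x n b) := by
  induction n with
  | zero => exact Commute.one_right _
  | succ n ih =>
    rw [PR_succ]
    refine Commute.mul_right ih ?_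
    rw [dpow, dpow]
    exact (((xt_comm_self x q n).pow_pow j (b n)).smul_left _).smul_right _

lemma PR_ext (x : L) {m n : ℕ} (b : ℕ →₀ ℕ) (hmn : m ≤ n) (h : ∀ p, m ≤ p → b p = 0) :
    PR x n b = PR x m b := by
  induction n with
  | zero =>
    have h0 : m = 0 := by omega
    rw [h0]
  | succ n ih =>
    rcases eq_or_lt_of_le hmn with h1 | h1
    · rw [h1]
    · rw [PR_succ, h n (by omega), dpow_zero', mul_one, ih (by omega)]

lemma PR_single_add (x : L) (k j : ℕ) (b : ℕ →₀ ℕ) (hb : b k = 0) {n : ℕ} (hn : k < n) :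
    PR x n (b + Finsupp.single k j) = dpow (xt x k) j * PR x n b := by
  induction n with
  | zero => omega
  | succ n ih =>
    rcases eq_or_lt_of_le (Nat.succ_le_of_lt hn) with h1 | h1
    · -- n = k
      have hk : n = k := by omega
      subst hk
      rw [PR_succ, PR_succ]
      have h2 : PR x n (b + Finsupp.single n j) = PR x n b := by
        refine PR_congr x n fun p hp => ?_
        simp only [Finsupp.add_apply, Finsupp.single_apply, if_neg (by omega : ¬ n = p)]
        omega
      rw [h2]
      have h3 : (b + Finsupp.single n j) n = j := by
        simp [Finsupp.add_apply, Finsupp.single_apply, hb]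
      rw [h3, hb, dpow_zero', mul_one, ← (dpow_comm_PR x n j n b).eq]
    · rw [PR_succ, PR_succ, ih (by omega)]
      have h3 : (b + Finsupp.single k j) n = b n := by
        simp only [Finsupp.add_apply, Finsupp.single_apply, if_neg (by omega : ¬ k = n)]
        omega
      rw [h3, mul_assoc]

lemma kx_split (x : L) (r s k : ℕ) :
    kx x r s k = ∑ j ∈ Finset.range (r+1),
      (if j * k ≤ s then dpow (xt x k) j * kx x (r-j) (s - j*k) (k+1) else 0) := by
  rw [kx_eq_sum]
  rw [← Finset.sum_fiberwise_of_maps_to (g := fun b => b k) (t := Finset.range (r+1))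
    (fun b hb => by
      simp only [Finset.mem_range]
      have := count_le b k
      rw [(mem_KSF.mp hb).1] at this
      omega) (PR x (s+1))]
  refine Finset.sum_congr rfl fun j hj => ?_
  simp only [Finset.mem_range] at hj
  have hkj : k * j = j * k := Nat.mul_comm k j
  rcases le_or_gt (j*k) s with hg | hg
  · rw [if_pos hg]
    have hbij : ∑ b ∈ (KSF r s k).filter (fun b => b k = j), PR x (s+1) b
        = ∑ b' ∈ KSF (r-j) (s - j*k) (k+1), dpow (xt x k) j * PR x (s+1) b' := by
      refine Finset.sum_bij' (fun b _ => b.erase k) (fun b' _ => b' + Finsupp.single k j)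
        ?_ ?_ ?_ ?_ ?_
      · -- erase maps into KSF'
        intro b hb
        simp only [Finset.mem_filter] at hb
        obtain ⟨hb1, hbk⟩ := hb
        obtain ⟨h1, h2, h3⟩ := mem_KSF.mp hb1
        rw [mem_KSF]
        have he1 := sum_erase_aux k b (fun _ m => m) (fun _ => rfl) (fun _ _ _ => rfl)
        have he2 := sum_erase_aux k b (fun p m => p*m) (fun p => by simp)
          (fun p m1 m2 => by ring)
        rw [h1, hbk] at he1
        rw [h2, hbk] at he2
        refine ⟨by omega, by omega, ?_⟩
        intro p hp
        rcases eq_or_ne p k with h | h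
        · rw [h, Finsupp.erase_same]
        · rw [Finsupp.erase_ne h]
          exact h3 p (by omega)
      · -- add-single maps into filter
        intro b' hb'
        obtain ⟨h1, h2, h3⟩ := mem_KSF.mp hb'
        have hbk0 : b' k = 0 := h3 k (by omega)
        simp only [Finset.mem_filter]
        refine ⟨?_, ?_⟩
        · rw [mem_KSF]
          refine ⟨?_, ?_, ?_⟩
          · rw [Finsupp.sum_add_index' (fun _ => rfl) (fun _ _ _ => rfl), h1,
              Finsupp.sum_single_index rfl]
            omega
          · rw [Finsupp.sum_add_index' (fun p => by simp) (fun p m1 m2 => by ring), h2,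
              Finsupp.sum_single_index (by simp)]
            omega
          · intro p hp
            simp only [Finsupp.add_apply, Finsupp.single_apply, if_neg (by omega : ¬ k = p)]
            rw [h3 p (by omega)]
            omega
        · simp [Finsupp.add_apply, Finsupp.single_apply, hbk0]
      · -- left inverse
        intro b hb
        simp only [Finset.mem_filter] at hb
        ext p
        rcases eq_or_ne p k with h | h
        · subst h
          simp [Finsupp.erase_same, Finsupp.single_apply, hb.2]
        · simp [Finsupp.erase_ne h, Finsupp.single_apply, Ne.symm h]
      · -- right inverse
        intro b' hb'
        obtain ⟨h1, h2, h3⟩ := mem_KSF.mp hb'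
        have hbk0 : b' k = 0 := h3 k (by omega)
        ext p
        rcases eq_or_ne p k with h | h
        · subst h
          simp [Finsupp.erase_same, Finsupp.add_apply, Finsupp.single_apply, hbk0]
        · simp [Finsupp.erase_ne h, Finsupp.add_apply, Finsupp.single_apply, Ne.symm h]
      · -- values
        intro b hb
        simp only [Finset.mem_filter] at hb
        obtain ⟨hb1, hbk⟩ := hb
        have hek : (b.erase k) k = 0 := Finsupp.erase_same
        have hrec : b.erase k + Finsupp.single k j = b := by
          rw [← hbk, Finsupp.erase_add_single]
        rcases Nat.eq_zero_or_pos j with hj0 | hj1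
        · subst hj0
          rw [dpow_zero', one_mul]
          refine PR_congr x (s+1) fun p hp => ?_
          rcases eq_or_ne p k with h | h
          · subst h
            rw [Finsupp.erase_same, hbk]
          · rw [Finsupp.erase_ne h]
        · conv_lhs => rw [← hrec]
          exact PR_single_add x k j (b.erase k) hek
            (by
              have : k ≤ j * k := Nat.le_mul_of_pos_left k hj1
              omega)
    rw [hbij, ← Finset.mul_sum, kx_eq_sum]
    congr 1
    refine Finset.sum_congr rfl fun b' hb' => ?_
    obtain ⟨h1, h2, h3⟩ := mem_KSF.mp hb'
    refine PR_ext x b' (by omega) ?_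
    intro p hp
    by_contra hne
    have hw := weight_le b' p
    rw [h2] at hw
    have : 1 ≤ b' p := Nat.one_le_iff_ne_zero.mpr hne
    nlinarith
  · rw [if_neg (by omega)]
    have hempty : (KSF r s k).filter (fun b => b k = j) = ∅ := by
      refine Finset.eq_empty_of_forall_notMem fun b hb => ?_
      simp only [Finset.mem_filter] at hb
      obtain ⟨hb1, hbk⟩ := hb
      obtain ⟨h1, h2, h3⟩ := mem_KSF.mp hb1
      have hw := weight_le b k
      rw [h2, hbk] at hw
      omega
    rw [hempty, Finset.sum_empty]

lemma kx_eq_yy (x : L) : ∀ (n r s k : ℕ), s + 1 ≤ k + n → kx x r s k = yy x k r s := by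
  intro n
  induction n with
  | zero =>
    intro r s k hk
    have hks : s < k := by omega
    cases r with
    | zero =>
      rw [yy_zero, kx_eq_sum]
      rcases eq_or_ne s 0 with hs | hs
      · subst hs
        rw [if_pos rfl]
        have hKS : KSF 0 0 k = {0} := by
          ext b
          rw [mem_KSF, Finset.mem_singleton]
          constructor
          · rintro ⟨h1, h2, h3⟩
            ext p
            have := count_le b p
            rw [h1] at this
            simp only [Finsupp.coe_zero, Pi.zero_apply]
            omega
          · rintro rfl
            simp
        rw [hKS, Finset.sum_singleton, PR]
        simp [List.range_succ, dpow_zero']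
      · rw [if_neg hs]
        have hempty : KSF 0 s k = ∅ := by
          refine Finset.eq_empty_of_forall_notMem fun b hb => ?_
          obtain ⟨h1, h2, h3⟩ := mem_KSF.mp hb
          apply hs
          rw [← h2]
          have hb0 : b = 0 := by
            ext p
            have := count_le b p
            rw [h1] at this
            simp only [Finsupp.coe_zero, Pi.zero_apply]
            omega
          rw [hb0]
          rfl
        rw [hempty, Finset.sum_empty]
    | succ r =>
      rw [yy_eq_zero_of_lt x k (r+1) s (by omega)
        (by
          have : k ≤ k * (r+1) := Nat.le_mul_of_pos_right k (by omega)
          omega)]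
      rw [kx_eq_sum]
      have hempty : KSF (r+1) s k = ∅ := by
        refine Finset.eq_empty_of_forall_notMem fun b hb => ?_
        obtain ⟨h1, h2, h3⟩ := mem_KSF.mp hb
        have hbne : b ≠ 0 := by
          intro h0
          rw [h0] at h1
          simp only [Finsupp.sum_zero_index] at h1
          omega
        obtain ⟨p, hp⟩ := Finsupp.support_nonempty_iff.mpr hbne
        have hbp : b p ≠ 0 := Finsupp.mem_support_iff.mp hp
        have hpk : k ≤ p := by
          by_contra hc
          exact hbp (h3 p (by omega))
        have hw := weight_le b p
        rw [h2] at hw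
        nlinarith [Nat.one_le_iff_ne_zero.mpr hbp]
      rw [hempty, Finset.sum_empty]
  | succ n ih =>
    intro r s k hk
    rcases le_or_gt (s+1) k with h | h
    · exact ih r s k (by omega)
    · rw [kx_split, yy_split]
      refine Finset.sum_congr rfl fun j hj => ?_
      rcases le_or_gt (j*k) s with hg | hg
      · rw [if_pos hg, if_pos hg, ih (r-j) (s - j*k) (k+1) (by omega)]
      · rw [if_neg (by omega), if_neg (by omega)]

lemma kx_yy (x : L) (r s k : ℕ) : kx x r s k = yy x k r s :=
  kx_eq_yy x (s+1) r s k (by omega)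

end Aux6

section Aux7
variable {L : Type} [LieRing L] [LieAlgebra ℂ L]

lemma yy_peel (x : L) (k r s : ℕ) :
    yy x (k+1) r s = yy x k r s - ∑ j ∈ Finset.range r,
      (if (j+1) * k ≤ s then dpow (xt x k) (j+1) * yy x (k+1) (r-(j+1)) (s - (j+1)*k)
       else 0) := by
  rw [eq_sub_iff_add_eq, yy_split x k r s, Finset.sum_range_succ']
  simp only [Nat.zero_mul, Nat.zero_le, if_true, Nat.sub_zero, dpow_zero', one_mul]
  exact add_comm _ _

end Aux7

section T
variable {L : Type} [LieRing L] [LieAlgebra ℂ L] {Φ ιI : Type}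
variable (ep em hc : Φ → L) (simple : ιI → Φ) (lam : Module.Dual ℂ L) (lamNat : Φ → ℕ)

lemma w_e (α : Φ) (m : ℕ) : xt (ep α) m • (wLam ep em hc simple lam lamNat) = 0 := by
  rw [wLam, ← Submodule.Quotient.mk_smul, smul_eq_mul, mul_one, Submodule.Quotient.mk_eq_zero]
  apply Submodule.subset_span
  left; left
  exact ⟨ep α, Submodule.subset_span ⟨α, rfl⟩, m, rfl⟩

lemma w_h (α : Φ) (m : ℕ) (hm : 1 ≤ m) :
    xt (hc α) m • (wLam ep em hc simple lam lamNat) = 0 := by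
  rw [wLam, ← Submodule.Quotient.mk_smul, smul_eq_mul, mul_one, Submodule.Quotient.mk_eq_zero]
  apply Submodule.subset_span
  left; right
  refine ⟨hc α, Submodule.subset_span ⟨α, rfl⟩, m, ?_⟩
  rw [if_neg (by omega), zero_smul, sub_zero]

lemma smul_mem_c {W : Type} [AddCommGroup W] [Module ℂ W] [Module (UCA L) W]
    [IsScalarTower ℂ (UCA L) W] (A : Submodule (UCA L) W) (c : ℂ) {v : W} (h : v ∈ A) :
    c • v ∈ A := by
  rw [← algebraMap_smul (UCA L) c v]
  exact A.smul_mem _ h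

variable (htr : ∀ β, IsSl2Triple (hc β) (ep β) (em β))
include htr

lemma xiGen_eq (α : Φ) (s r : ℕ) :
    (xt (ep α) 1 ^ s * xt (em α) 0 ^ (s+r)) • (wLam ep em hc simple lam lamNat)
      = ((((s.factorial * (s+r).factorial : ℕ)):ℂ) * (-1:ℂ)^s) •
          (yy (em α) 0 r s • (wLam ep em hc simple lam lamNat)) := by
  have heq : xt (ep α) 1 ^ s * xt (em α) 0 ^ (s+r)
      = (((s.factorial * (s+r).factorial : ℕ)):ℂ) •
          (dpow (xt (ep α) 1) s * dpow (xt (em α) 0) (s+r)) := by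
    rw [pow_eq_dpow, pow_eq_dpow, Algebra.smul_mul_assoc, mul_smul_comm, smul_smul]
    push_cast
    ring_nf
  rw [heq, csmul_act,
    garland_w (htr α) (wLam ep em hc simple lam lamNat) (w_e ep em hc simple lam lamNat α)
      (w_h ep em hc simple lam lamNat α) s r, csmul_act, smul_smul]

lemma yy0_from_gen (α : Φ) (s r : ℕ) :
    yy (em α) 0 r s • (wLam ep em hc simple lam lamNat)
      = (((((s.factorial * (s+r).factorial : ℕ)):ℂ) * (-1:ℂ)^s)⁻¹) •
          ((xt (ep α) 1 ^ s * xt (em α) 0 ^ (s+r)) • (wLam ep em hc simple lam lamNat)) := by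
  rw [xiGen_eq ep em hc simple lam lamNat htr α s r, smul_smul, inv_mul_cancel₀, one_smul]
  apply mul_ne_zero
  · exact_mod_cast Nat.cast_ne_zero.mpr (Nat.mul_ne_zero (Nat.factorial_ne_zero s)
      (Nat.factorial_ne_zero (s+r)))
  · exact pow_ne_zero s (by norm_num)

end T

section T2
variable {L : Type} [LieRing L] [LieAlgebra ℂ L] {Φ ιI : Type}
variable (ep em hc : Φ → L) (simple : ιI → Φ) (lam : Module.Dual ℂ L) (lamNat : Φ → ℕ)
variable (htr : ∀ β, IsSl2Triple (hc β) (ep β) (em β))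
include htr

lemma yy_mem_A (ξ : Φ → ℕ → ℕ) (α : Φ) :
    ∀ r k s : ℕ, 1 ≤ k → 1 ≤ s →
    (∃ k', k ≤ k' ∧ 1 + k' * r + tailSum (ξ α) k' ≤ s + r) →
    yy (em α) k r s • wLam ep em hc simple lam lamNat
      ∈ Submodule.span (UCA L) (xiGens ep em hc simple lam lamNat ξ) := by
  intro r
  induction r using Nat.strong_induction_on with
  | _ r ihr =>
  rcases Nat.eq_zero_or_pos r with hr0 | hrpos
  · subst hr0
    intro k s _ hs _
    rw [yy_zero, if_neg (by omega), zero_smul]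
    exact Submodule.zero_mem _
  intro k
  induction k with
  | zero =>
    intro s h0
    exact absurd h0 (by omega)
  | succ k ihk =>
    intro s hk1 hs hcond
    obtain ⟨k', hkk', hineq⟩ := hcond
    have hterms : ∀ j ∈ Finset.range r,
        (if (j+1) * k ≤ s then dpow (xt (em α) k) (j+1) *
            yy (em α) (k+1) (r-(j+1)) (s - (j+1)*k) else 0) •
          wLam ep em hc simple lam lamNat
          ∈ Submodule.span (UCA L) (xiGens ep em hc simple lam lamNat ξ) := by
      intro j hj
      simp only [Finset.mem_range] at hj
      by_cases hg : (j+1) * k ≤ s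
      · rw [if_pos hg]
        rcases Nat.eq_zero_or_pos (r - (j+1)) with h0 | h1
        · rcases eq_or_ne (s - (j+1)*k) 0 with hs0 | hs0
          · exfalso
            have e1 : j + 1 = r := by omega
            have e2 : (k+1) * r ≤ k' * r := Nat.mul_le_mul_right r (by omega)
            have e3 : (k+1) * r = r * k + r := by ring
            have e4 : (j+1) * k = r * k := by rw [e1]
            omega
          · rw [h0, yy_zero, if_neg hs0, mul_zero, zero_smul]
            exact Submodule.zero_mem _
        · rcases eq_or_ne (s - (j+1)*k) 0 with hs0 | hs0
          · rw [hs0, yy_zero_right _ _ _ h1 (by omega), mul_zero, zero_smul]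
            exact Submodule.zero_mem _
          · rw [mul_smul]
            refine Submodule.smul_mem _ _ ?_
            refine ihr (r - (j+1)) (by omega) (k+1) (s - (j+1)*k) (by omega)
              (by omega) ⟨k', by omega, ?_⟩
            have e1 : k' * (r - (j+1)) + k' * (j+1) = k' * r := by
              rw [← Nat.mul_add]
              congr 1
              omega
            have e2 : (k+1) * (j+1) ≤ k' * (j+1) := Nat.mul_le_mul_right _ (by omega)
            have e3 : (k+1) * (j+1) = (j+1) * k + (j+1) := by ring
            omega
      · rw [if_neg hg, zero_smul]
        exact Submodule.zero_mem _
    rcases Nat.eq_zero_or_pos k with hk0 | hkpos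
    · subst hk0
      rw [yy_peel (em α) 0 r s, sub_smul, Finset.sum_smul]
      refine Submodule.sub_mem _ ?_ (Submodule.sum_mem _ hterms)
      rw [yy0_from_gen ep em hc simple lam lamNat htr α s r]
      refine smul_mem_c _ _ ?_
      refine Submodule.subset_span ⟨α, s, r, hs, hrpos, ⟨k', by omega, ?_⟩, rfl⟩
      have e0 : r * k' = k' * r := Nat.mul_comm _ _
      omega
    · rw [yy_peel (em α) k r s, sub_smul, Finset.sum_smul]
      refine Submodule.sub_mem _ ?_ (Submodule.sum_mem _ hterms)
      exact ihk s hkpos hs ⟨k', by omega, hineq⟩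

lemma yy_mem_B (ξ : Φ → ℕ → ℕ) (α : Φ) :
    ∀ r n k s : ℕ, s + 1 ≤ k + n → 1 ≤ k → 1 ≤ s →
    (∃ k', k ≤ k' ∧ 1 + k' * r + tailSum (ξ α) k' ≤ s + r) →
    yy (em α) k r s • wLam ep em hc simple lam lamNat
      ∈ Submodule.span (UCA L)
        {v | ∃ (β : Φ) (r' s' k'' : ℕ), 1 ≤ r' ∧ 1 ≤ s' ∧ 1 ≤ k'' ∧
              s' + r' ≥ 1 + k'' * r' + tailSum (ξ β) k'' ∧
              v = kx (em β) r' s' k'' • wLam ep em hc simple lam lamNat} := by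
  intro r
  induction r using Nat.strong_induction_on with
  | _ r ihr =>
  rcases Nat.eq_zero_or_pos r with hr0 | hrpos
  · subst hr0
    intro n k s _ _ hs _
    rw [yy_zero, if_neg (by omega), zero_smul]
    exact Submodule.zero_mem _
  intro n
  induction n with
  | zero =>
    intro k s hfuel hk hs _
    rw [yy_eq_zero_of_lt (em α) k r s hrpos
      (by
        have : k ≤ k * r := Nat.le_mul_of_pos_right k hrpos
        omega), zero_smul]
    exact Submodule.zero_mem _
  | succ n ihn =>
    intro k s hfuel hk hs hcond
    by_cases hgen : 1 + k * r + tailSum (ξ α) k ≤ s + r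
    · refine Submodule.subset_span ⟨α, r, s, k, hrpos, hs, hk, hgen, ?_⟩
      rw [kx_yy]
    · obtain ⟨k', hkk', hineq⟩ := hcond
      have hkk1 : k + 1 ≤ k' := by
        rcases eq_or_lt_of_le hkk' with h | h
        · exfalso
          subst h
          exact hgen hineq
        · omega
      rw [yy_split (em α) k r s, Finset.sum_smul]
      refine Submodule.sum_mem _ fun j hj => ?_
      simp only [Finset.mem_range] at hj
      by_cases hg : j * k ≤ s
      · rw [if_pos hg]
        rcases Nat.eq_zero_or_pos j with hj0 | hj1
        · subst hj0
          simp only [Nat.zero_mul, Nat.sub_zero, dpow_zero', one_mul]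
          exact ihn (k+1) s (by omega) (by omega) hs ⟨k', by omega, hineq⟩
        · rcases Nat.eq_zero_or_pos (r - j) with h0 | h1
          · rcases eq_or_ne (s - j*k) 0 with hs0 | hs0
            · exfalso
              have e1 : j = r := by omega
              have e2 : (k+1) * r ≤ k' * r := Nat.mul_le_mul_right r (by omega)
              have e3 : (k+1) * r = r * k + r := by ring
              have e4 : j * k = r * k := by rw [e1]
              omega
            · rw [h0, yy_zero, if_neg hs0, mul_zero, zero_smul]
              exact Submodule.zero_mem _
          · rcases eq_or_ne (s - j*k) 0 with hs0 | hs0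
            · rw [hs0, yy_zero_right _ _ _ h1 (by omega), mul_zero, zero_smul]
              exact Submodule.zero_mem _
            · rw [mul_smul]
              refine Submodule.smul_mem _ _ ?_
              refine ihr (r - j) (by omega) ((s - j*k)+1) (k+1) (s - j*k) (by omega)
                (by omega) (by omega) ⟨k', by omega, ?_⟩
              have e1 : k' * (r - j) + k' * j = k' * r := by
                rw [← Nat.mul_add]
                congr 1
                omega
              have e2 : (k+1) * j ≤ k' * j := Nat.mul_le_mul_right _ (by omega)
              have e3 : (k+1) * j = j * k + j := by ring
              omega
      · rw [if_neg hg, zero_smul]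
        exact Submodule.zero_mem _

lemma gen_mem_B (ξ : Φ → ℕ → ℕ) (α : Φ) (s r : ℕ) (hs : 1 ≤ s) (hr : 1 ≤ r)
    (hcond : ∃ k, 1 ≤ k ∧ s + r ≥ 1 + r * k + tailSum (ξ α) k) :
    (xt (ep α) 1 ^ s * xt (em α) 0 ^ (s+r)) • wLam ep em hc simple lam lamNat
      ∈ Submodule.span (UCA L)
        {v | ∃ (β : Φ) (r' s' k'' : ℕ), 1 ≤ r' ∧ 1 ≤ s' ∧ 1 ≤ k'' ∧
              s' + r' ≥ 1 + k'' * r' + tailSum (ξ β) k'' ∧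
              v = kx (em β) r' s' k'' • wLam ep em hc simple lam lamNat} := by
  obtain ⟨k, hk1, hineq⟩ := hcond
  rw [xiGen_eq ep em hc simple lam lamNat htr α s r]
  refine smul_mem_c _ _ ?_
  rw [yy_split (em α) 0 r s, Finset.sum_smul]
  refine Submodule.sum_mem _ fun j hj => ?_
  simp only [Finset.mem_range] at hj
  rw [if_pos (by omega : j * 0 ≤ s)]
  simp only [Nat.mul_zero, Nat.sub_zero, Nat.zero_add]
  rcases Nat.eq_zero_or_pos (r - j) with h0 | h1
  · rw [h0, yy_zero, if_neg (by omega), mul_zero, zero_smul]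
    exact Submodule.zero_mem _
  · rw [mul_smul]
    refine Submodule.smul_mem _ _ ?_
    refine yy_mem_B ep em hc simple lam lamNat htr ξ α (r - j) (s+1) 1 s (by omega)
      (le_refl 1) hs ⟨k, hk1, ?_⟩
    have e1 : k * (r - j) + k * j = k * r := by
      rw [← Nat.mul_add]
      congr 1
      omega
    have e2 : 1 * j ≤ k * j := Nat.mul_le_mul_right _ hk1
    have e3 : 1 * j = j := by ring
    have e0 : r * k = k * r := Nat.mul_comm _ _
    omega

end T2

/-- Proposition `third`: the third presentation of `V(ξ)`.  The submodule of
`W_loc(λ)` generated by the elements `(x_α⁺⊗t)^s (x_α⁻⊗1)^{s+r} w_λ` (for `α ∈ R⁺`, `s,r ≥ 1`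
with `s+r ≥ 1 + rk + Σ_{j≥k+1} ξ^α_j` for some `k ≥ 1`) coincides with the submodule generated
by the elements `_k x_α⁻(r,s) w_λ` (for `α ∈ R⁺`, `r,s,k ≥ 1` with
`s+r ≥ 1 + kr + Σ_{j≥k+1} ξ^α_j`); in particular, for all `α ∈ R⁺` and `r,k ≥ 1` with
`r ≥ 1 + Σ_{j≥k+1} ξ^α_j` one has `(x_α⁻ ⊗ t^k)^r v_ξ = 0`. -/
theorem third_presentation_of_VXi
    {L : Type} [LieRing L] [LieAlgebra ℂ L] {Φ ιI : Type}
    (ep em hc : Φ → L) (simple : ιI → Φ)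
    (lam : Module.Dual ℂ L) (lamNat : Φ → ℕ)
    -- the elements `x_α⁺, x_α⁻, h_α` form an `sl₂`-triple for each positive root `α`
    (htriple : ∀ α, IsSl2Triple (hc α) (ep α) (em α))
    -- `λ(h_α) = lamNat α` is a non-negative integer for every `α ∈ R⁺`, i.e. `λ ∈ P⁺`
    (hlam : ∀ α, lam (hc α) = (lamNat α : ℂ))
    -- `λ ≠ 0`
    (hlam_ne : lam ≠ 0)
    -- `ξ` is a `λ`-compatible tuple of partitions
    (ξ : Φ → ℕ → ℕ) (hcompat : IsCompatible lamNat ξ) :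
    Submodule.span (UCA L) (xiGens ep em hc simple lam lamNat ξ) =
      Submodule.span (UCA L)
        {v | ∃ (α : Φ) (r s k : ℕ), 1 ≤ r ∧ 1 ≤ s ∧ 1 ≤ k ∧
              s + r ≥ 1 + k * r + tailSum (ξ α) k ∧
              v = kx (em α) r s k • wLam ep em hc simple lam lamNat} ∧
    ∀ (α : Φ) (r k : ℕ), 1 ≤ r → 1 ≤ k → r ≥ 1 + tailSum (ξ α) k →
      (xt (em α) k) ^ r • vXi ep em hc simple lam lamNat ξ = 0 := by
  refine ⟨le_antisymm ?_ ?_, ?_⟩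
  · rw [Submodule.span_le]
    rintro v ⟨α, s, r, hs, hr, hcond, rfl⟩
    rw [SetLike.mem_coe]
    exact gen_mem_B ep em hc simple lam lamNat htriple ξ α s r hs hr hcond
  · rw [Submodule.span_le]
    rintro v ⟨α, r, s, k, hr, hs, hk, hineq, rfl⟩
    rw [SetLike.mem_coe, kx_yy]
    exact yy_mem_A ep em hc simple lam lamNat htriple ξ α r k s hk hs ⟨k, le_refl k, hineq⟩
  · intro α r k hr hk hineq
    rw [vXi, ← Submodule.Quotient.mk_smul, Submodule.Quotient.mk_eq_zero]
    have h1 : (xt (em α) k) ^ r • wLam ep em hc simple lam lamNat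
        = ((r.factorial : ℂ)) • (yy (em α) k r (k * r) • wLam ep em hc simple lam lamNat) := by
      rw [pow_eq_dpow, csmul_act, ← yy_pure]
    rw [h1]
    refine smul_mem_c _ _ ?_
    refine yy_mem_A ep em hc simple lam lamNat htriple ξ α r k (k*r) hk
      (Nat.one_le_iff_ne_zero.mpr (Nat.mul_ne_zero (by omega) (by omega))) ⟨k, le_refl k, by omega⟩

end
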